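/- Let T ≥ 1 and let G_T : ℝ^T → ℝ be as in the lower-bound construction. For x ∈ ℝ^T let prog_{1/2}(x) := max{i ∈ {0,…,T} : |x_i| > 1/2} with the convention x₀ := 1. Then for every q ≥ 1 and all indices i₁, …, i_q ∈ {1,…,T} with max_j i_j > prog_{1/2}(x) + 1, the mixed partial derivative ∂^q G_T/∂x_{i₁}⋯∂x_{i_q}(x) = 0. -/

import Mathlib

/-- The bump-like component function `Ψ` of the hard-instance construction. -/
noncomputable def Psi (x : ℝ) : ℝ :=
  if 1 / 2 < x then Real.exp (1 - 1 / (2 * x - 1) ^ 2) else 0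

/-- The component function `Λ` of the hard-instance construction. -/
noncomputable def Lam (x : ℝ) : ℝ := 8 * (Real.exp (-x ^ 2 / 2) - 1)

/-- The hard instance `G_T(x) = Ψ(1)Λ(x₁) + ∑_{i=2}^T [Ψ(-x_{i-1})Λ(-x_i) + Ψ(x_{i-1})Λ(x_i)]`
(coordinates are `0`-indexed in Lean: mathematical `x_i` is Lean's `x ⟨i-1, _⟩`). -/
noncomputable def G (T : ℕ) (x : EuclideanSpace ℝ (Fin T)) : ℝ :=
  ∑ i : Fin T,
    if (i : ℕ) = 0 then Psi 1 * Lam (x i)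
    else
      Psi (-(x ⟨(i : ℕ) - 1, Nat.lt_of_le_of_lt (Nat.sub_le _ _) i.isLt⟩)) * Lam (-(x i)) +
        Psi (x ⟨(i : ℕ) - 1, Nat.lt_of_le_of_lt (Nat.sub_le _ _) i.isLt⟩) * Lam (x i)

/-- `prog_α(x) = max{i ∈ {0,…,T} : |x_i| > α}` with the convention `x₀ := 1`
(mathematical index `i` corresponds to the Lean coordinate `j : Fin T` with `j + 1 = i`). -/
noncomputable def prog {T : ℕ} (α : ℝ) (x : EuclideanSpace ℝ (Fin T)) : ℕ :=
  sSup {i : ℕ | i = 0 ∨ ∃ j : Fin T, (j : ℕ) + 1 = i ∧ α < |x j|}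

noncomputable section ZCAux

open scoped Topology
open Polynomial Real Filter Set Function

/-- `exp (-1/x²)` glued with `0` for `x ≤ 0`. -/
def gl (x : ℝ) : ℝ := if x ≤ 0 then 0 else Real.exp (-(x⁻¹ ^ 2))

lemma gl_of_nonpos {x : ℝ} (hx : x ≤ 0) : gl x = 0 := if_pos hx

lemma gl_tendsto (p : ℝ[X]) :
    Tendsto (fun x ↦ p.eval x⁻¹ * gl x) (𝓝 0) (𝓝 0) := by
  simp only [gl, mul_ite, mul_zero]
  refine tendsto_const_nhds.if ?_
  simp only [not_le]
  have h1 : Tendsto (fun y : ℝ ↦ p.eval y * exp (-(y ^ 2))) atTop (𝓝 0) := by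
    have h2 : Tendsto (fun y : ℝ ↦ p.eval y / exp y) atTop (𝓝 0) := p.tendsto_div_exp_atTop
    rw [tendsto_zero_iff_norm_tendsto_zero] at h2 ⊢
    refine squeeze_zero' (Eventually.of_forall fun y ↦ norm_nonneg _) ?_ h2
    filter_upwards [eventually_ge_atTop (1 : ℝ)] with y hy
    have h3 : exp (-(y ^ 2)) ≤ exp (-y) := by
      apply exp_le_exp.2; nlinarith
    have h4 : (0:ℝ) < exp y := exp_pos y
    rw [Real.norm_eq_abs, Real.norm_eq_abs, abs_mul, abs_div, abs_of_pos h4,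
      abs_of_pos (exp_pos _), div_eq_mul_inv, ← Real.exp_neg]
    exact mul_le_mul_of_nonneg_left h3 (abs_nonneg _)
  have h5 := h1.comp tendsto_inv_nhdsGT_zero
  exact h5

def Qgl (p : ℝ[X]) : ℝ[X] := C 2 * X ^ 3 * p - X ^ 2 * derivative p

lemma gl_hasDerivAt (p : ℝ[X]) (x : ℝ) :
    HasDerivAt (fun x ↦ p.eval x⁻¹ * gl x) ((Qgl p).eval x⁻¹ * gl x) x := by
  rcases lt_trichotomy x 0 with hx | rfl | hx
  · rw [gl_of_nonpos hx.le, mul_zero]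
    refine (hasDerivAt_const _ 0).congr_of_eventuallyEq ?_
    filter_upwards [gt_mem_nhds hx] with y hy
    rw [gl_of_nonpos hy.le, mul_zero]
  · rw [gl_of_nonpos le_rfl, mul_zero, hasDerivAt_iff_tendsto_slope]
    refine ((gl_tendsto (p * X)).mono_left inf_le_left).congr fun x ↦ ?_
    simp [slope_def_field, gl_of_nonpos le_rfl, div_eq_mul_inv, mul_right_comm]
  · have hx' : x ≠ 0 := hx.ne'
    have h1 : HasDerivAt (fun y : ℝ ↦ p.eval y * exp (-(y ^ 2)))
        ((derivative p).eval x⁻¹ * exp (-(x⁻¹ ^ 2)) +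
          p.eval x⁻¹ * (exp (-(x⁻¹ ^ 2)) * -(2 * x⁻¹ ^ 1))) x⁻¹ := by
      have hpow : HasDerivAt (fun y : ℝ ↦ -(y ^ 2)) (-(2 * x⁻¹ ^ 1)) x⁻¹ := by
        simpa using (hasDerivAt_pow 2 x⁻¹).fun_neg
      exact (p.hasDerivAt x⁻¹).mul hpow.exp
    have h2 := h1.comp x (hasDerivAt_inv hx')
    have heq : (fun x : ℝ ↦ p.eval x⁻¹ * gl x)
        =ᶠ[𝓝 x] (fun y : ℝ ↦ p.eval y * exp (-(y ^ 2))) ∘ fun x : ℝ ↦ x⁻¹ := by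
      filter_upwards [lt_mem_nhds hx] with y hy
      simp [gl, hy.not_ge, Function.comp]
    have h3 := h2.congr_of_eventuallyEq heq
    refine h3.congr_deriv ?_
    have hglx : gl x = exp (-(x⁻¹ ^ 2)) := by simp [gl, hx.not_ge]
    rw [hglx]
    simp only [Qgl, Polynomial.eval_sub, Polynomial.eval_mul, Polynomial.eval_pow,
      Polynomial.eval_X, Polynomial.eval_C]
    rw [show (x ^ 2)⁻¹ = x⁻¹ ^ 2 by rw [inv_pow]]
    ring

lemma gl_contDiff_poly (n : ℕ) (p : ℝ[X]) :
    ContDiff ℝ n (fun x ↦ p.eval x⁻¹ * gl x) := by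
  induction n generalizing p with
  | zero =>
    have : Differentiable ℝ (fun x ↦ p.eval x⁻¹ * gl x) := fun x ↦ (gl_hasDerivAt p x).differentiableAt
    exact contDiff_zero.2 this.continuous
  | succ m ihm =>
    rw [show ((m + 1 : ℕ) : WithTop ℕ∞) = (m : WithTop ℕ∞) + 1 by norm_cast]
    refine contDiff_succ_iff_deriv.2
      ⟨fun x ↦ (gl_hasDerivAt p x).differentiableAt, by simp, ?_⟩
    rw [show deriv (fun x ↦ p.eval x⁻¹ * gl x) = fun x ↦ (Qgl p).eval x⁻¹ * gl x from
      funext fun x ↦ (gl_hasDerivAt p x).deriv]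
    exact ihm (Qgl p)

lemma gl_contDiff (n : ℕ) : ContDiff ℝ n gl := by
  have := gl_contDiff_poly n 1
  simpa using this

lemma gl_iteratedDeriv (n : ℕ) (p : ℝ[X]) :
    iteratedDeriv n (fun x ↦ p.eval x⁻¹ * gl x) = fun x ↦ (Qgl^[n] p).eval x⁻¹ * gl x := by
  induction n generalizing p with
  | zero => simp
  | succ m ihm =>
    rw [iteratedDeriv_succ', show deriv (fun x ↦ p.eval x⁻¹ * gl x)
        = fun x ↦ (Qgl p).eval x⁻¹ * gl x from funext fun x ↦ (gl_hasDerivAt p x).deriv,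
      ihm (Qgl p), Function.iterate_succ_apply]

lemma gl_flat (n : ℕ) {x : ℝ} (hx : x ≤ 0) : iteratedDeriv n gl x = 0 := by
  have h : gl = fun x ↦ (1 : ℝ[X]).eval x⁻¹ * gl x := by funext y; simp
  rw [h, gl_iteratedDeriv]
  simp [gl_of_nonpos hx]

lemma Psi_eq : Psi = fun x ↦ Real.exp 1 * gl (2 * x - 1) := by
  funext x
  rw [Psi, gl]
  by_cases hx : 1 / 2 < x
  · rw [if_pos hx, if_neg (by linarith)]
    rw [← Real.exp_add]
    congr 1
    rw [inv_pow]
    ring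
  · rw [if_neg hx, if_pos (by linarith [not_lt.1 hx]), mul_zero]

lemma affine_contDiff {n : ℕ} : ContDiff ℝ (n : WithTop ℕ∞) (fun x : ℝ ↦ 2 * x - 1) :=
  (contDiff_const.mul contDiff_id).sub contDiff_const

lemma Psi_contDiff (n : ℕ) : ContDiff ℝ n Psi := by
  rw [Psi_eq]
  exact contDiff_const.mul ((gl_contDiff n).comp affine_contDiff)

lemma iteratedDeriv_const_mul' {f : ℝ → ℝ} (n : ℕ) (hf : ContDiff ℝ n f) (c : ℝ) (x : ℝ) :
    iteratedDeriv n (fun z ↦ c * f z) x = c * iteratedDeriv n f x := by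
  rw [← iteratedDerivWithin_univ, ← iteratedDerivWithin_univ]
  exact iteratedDerivWithin_const_mul (Set.mem_univ x) uniqueDiffOn_univ c hf.contDiffAt.contDiffWithinAt

lemma Psi_flat (n : ℕ) {y : ℝ} (hy : y ≤ 1 / 2) : iteratedDeriv n Psi y = 0 := by
  rw [Psi_eq]
  rw [iteratedDeriv_const_mul' (f := fun x : ℝ ↦ gl (2 * x - 1)) n (by exact (gl_contDiff n).comp affine_contDiff) (Real.exp 1) y]
  have h1 : (fun x : ℝ ↦ gl (2 * x - 1)) = fun x : ℝ ↦ (fun z ↦ gl (z + -1)) (2 * x) := by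
    funext x; rw [sub_eq_add_neg]
  rw [h1, iteratedDeriv_comp_const_mul (f := fun z ↦ gl (z + -1)) ?hc 2]
  · rw [iteratedDeriv_comp_add_const n gl (-1)]
    simp only
    rw [gl_flat n (by linarith : 2 * y + -1 ≤ 0)]
    simp
  · case hc =>
      exact (gl_contDiff n).comp ((contDiff_id).add contDiff_const)

lemma Lam_contDiff (n : ℕ) : ContDiff ℝ n Lam := by
  unfold Lam
  have h : ContDiff ℝ (n : WithTop ℕ∞) fun x : ℝ ↦ -x ^ 2 / 2 := by
    apply ContDiff.div_const
    exact (contDiff_id.pow 2).neg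
  exact contDiff_const.mul ((Real.contDiff_exp.comp h).sub contDiff_const)

lemma PsiNeg_contDiff (n : ℕ) : ContDiff ℝ n (fun u : ℝ ↦ Psi (-u)) :=
  (Psi_contDiff n).comp contDiff_neg

lemma LamNeg_contDiff (n : ℕ) : ContDiff ℝ n (fun u : ℝ ↦ Lam (-u)) :=
  (Lam_contDiff n).comp contDiff_neg

lemma PsiNeg_flat (n : ℕ) {y : ℝ} (hy : -y ≤ 1 / 2) :
    iteratedDeriv n (fun u : ℝ ↦ Psi (-u)) y = 0 := by
  rw [iteratedDeriv_comp_neg, Psi_flat n hy, smul_zero]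

abbrev Euc (T : ℕ) := EuclideanSpace ℝ (Fin T)

/-- smooth in all finite orders -/
def Sm (f : ℝ → ℝ) : Prop := ∀ n : ℕ, ContDiff ℝ n f

lemma Sm.deriv {f : ℝ → ℝ} (hf : Sm f) : Sm (deriv f) := by
  intro n
  have h := hf (n + 1)
  rw [show ((n + 1 : ℕ) : WithTop ℕ∞) = (n : WithTop ℕ∞) + 1 by norm_cast] at h
  exact (contDiff_succ_iff_deriv.1 h).2.2

lemma Sm.hasDerivAt {f : ℝ → ℝ} (hf : Sm f) (u : ℝ) : HasDerivAt f (_root_.deriv f u) u :=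
  (((hf 1).differentiable (by simp)) u).hasDerivAt

lemma Sm.prod {f g : ℝ → ℝ} (hf : Sm f) (hg : Sm g) (a b : Fin T) (n : ℕ) :
    ContDiff ℝ n (fun y : Euc T ↦ f (y a) * g (y b)) := by
  exact ((hf n).comp
      (EuclideanSpace.proj a : EuclideanSpace ℝ (Fin T) →L[ℝ] ℝ).contDiff).mul
    ((hg n).comp (EuclideanSpace.proj b : EuclideanSpace ℝ (Fin T) →L[ℝ] ℝ).contDiff)

lemma hasFDerivAt_coord {f : ℝ → ℝ} (hf : Sm f) (a : Fin T) (y : Euc T) :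
    HasFDerivAt (fun y : Euc T ↦ f (y a))
      (deriv f (y a) • (EuclideanSpace.proj a : EuclideanSpace ℝ (Fin T) →L[ℝ] ℝ)) y :=
  (hf.hasDerivAt (y a)).comp_hasFDerivAt y
    (EuclideanSpace.proj a : EuclideanSpace ℝ (Fin T) →L[ℝ] ℝ).hasFDerivAt

lemma fderiv_prod_apply {f g : ℝ → ℝ} (hf : Sm f) (hg : Sm g) (a b d : Fin T) (y : Euc T) :
    fderiv ℝ (fun y : Euc T ↦ f (y a) * g (y b)) y (EuclideanSpace.single d 1) =
      (if a = d then deriv f (y a) * g (y b) else 0) +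
        (if b = d then f (y a) * deriv g (y b) else 0) := by
  have h := (hasFDerivAt_coord hf a y).fun_mul (hasFDerivAt_coord hg b y)
  rw [h.fderiv]
  simp only [ContinuousLinearMap.add_apply, ContinuousLinearMap.smul_apply,
    PiLp.proj_apply, EuclideanSpace.single_apply, smul_eq_mul]
  split_ifs <;> ring

lemma fderiv_coord_apply {f : ℝ → ℝ} (hf : Sm f) (a d : Fin T) (y : Euc T) :
    fderiv ℝ (fun y : Euc T ↦ f (y a)) y (EuclideanSpace.single d 1) =
      (if a = d then deriv f (y a) else 0) := by
  rw [(hasFDerivAt_coord hf a y).fderiv]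
  simp only [ContinuousLinearMap.smul_apply, PiLp.proj_apply,
    EuclideanSpace.single_apply, smul_eq_mul]
  split_ifs <;> ring

lemma iter_right {h : Euc T → ℝ} (hh : ∀ n : ℕ, ContDiff ℝ n h) (q : ℕ)
    (c : Fin (q + 1) → Euc T) (x : Euc T) :
    iteratedFDeriv ℝ (q + 1) h x c =
      iteratedFDeriv ℝ q (fun y ↦ fderiv ℝ h y (c (Fin.last q))) x (Fin.init c) := by
  rw [iteratedFDeriv_succ_apply_right]
  have hfd : ContDiff ℝ (q : WithTop ℕ∞) (fun y ↦ fderiv ℝ h y) := by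
    have h1 := hh (q + 1)
    rw [show ((q + 1 : ℕ) : WithTop ℕ∞) = (q : WithTop ℕ∞) + 1 by norm_cast] at h1
    exact h1.fderiv_right le_rfl
  have h2 := (ContinuousLinearMap.apply ℝ ℝ (c (Fin.last q))).iteratedFDeriv_comp_left
    (hfd.contDiffAt (x := x)) le_rfl
  have h3 := congrFun (congrArg DFunLike.coe h2) (Fin.init c)
  simp only [ContinuousLinearMap.compContinuousMultilinearMap_coe, Function.comp_apply,
    ContinuousLinearMap.apply_apply] at h3
  exact (h3.trans rfl).symm


lemma iteratedFDeriv_zero_fun_apply {q : ℕ} {x : Euc T} {v : Fin q → Euc T} :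
    iteratedFDeriv ℝ q (fun _ : Euc T ↦ (0 : ℝ)) x v = 0 := by
  rw [iteratedFDeriv_zero_fun]
  simp

/-- flat-factor lemma: if all derivatives of `f` vanish at `x a`, the iterated
derivative of `y ↦ f (y a) * g (y b)` at `x` along coordinate directions vanishes. -/
lemma lemC (x : Euc T) (a : Fin T) :
    ∀ (q : ℕ) (f g : ℝ → ℝ), Sm f → Sm g → (∀ n : ℕ, iteratedDeriv n f (x a) = 0) →
      ∀ (b : Fin T), a ≠ b → ∀ (c : Fin q → Fin T),
      iteratedFDeriv ℝ q (fun y : Euc T ↦ f (y a) * g (y b)) x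
        (fun j ↦ EuclideanSpace.single (c j) 1) = 0 := by
  intro q
  induction q with
  | zero =>
    intro f g hf hg hf0 b hab c
    rw [iteratedFDeriv_zero_apply]
    have h0 : f (x a) = 0 := by simpa [iteratedDeriv_zero] using hf0 0
    rw [h0, zero_mul]
  | succ q IH =>
    intro f g hf hg hf0 b hab c
    rw [iter_right (Sm.prod hf hg a b) q _ x]
    set d := c (Fin.last q) with hd
    have hfe : (fun y : Euc T ↦ fderiv ℝ (fun y : Euc T ↦ f (y a) * g (y b)) y
        (EuclideanSpace.single d 1)) = fun y : Euc T ↦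
        (if a = d then deriv f (y a) * g (y b) else 0) +
          (if b = d then f (y a) * deriv g (y b) else 0) :=
      funext fun y ↦ fderiv_prod_apply hf hg a b d y
    rw [hfe]
    by_cases had : a = d
    · have hbd : ¬ b = d := fun h ↦ hab (had.trans h.symm)
      simp only [if_pos had, if_neg hbd, add_zero]
      have hflat : ∀ n : ℕ, iteratedDeriv n (deriv f) (x a) = 0 := fun n ↦ by
        rw [← iteratedDeriv_succ']; exact hf0 (n + 1)
      exact IH (deriv f) g hf.deriv hg hflat b hab _
    · by_cases hbd : b = d
      · simp only [if_neg had, if_pos hbd, zero_add]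
        exact IH f (deriv g) hf hg.deriv hf0 b hab _
      · simp only [if_neg had, if_neg hbd, add_zero]
        exact iteratedFDeriv_zero_fun_apply

/-- unused-coordinate lemma, product form. -/
lemma lemD (x : Euc T) (a b : Fin T) (hab : a ≠ b) :
    ∀ (q : ℕ) (f g : ℝ → ℝ), Sm f → Sm g →
      ∀ (c : Fin q → Fin T), (∃ j : Fin q, c j ≠ a ∧ c j ≠ b) →
      iteratedFDeriv ℝ q (fun y : Euc T ↦ f (y a) * g (y b)) x
        (fun j ↦ EuclideanSpace.single (c j) 1) = 0 := by
  intro q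
  induction q with
  | zero =>
    intro f g hf hg c hbad
    exact absurd hbad (by rintro ⟨j, -⟩; exact j.elim0)
  | succ q IH =>
    intro f g hf hg c hbad
    rw [iter_right (Sm.prod hf hg a b) q _ x]
    set d := c (Fin.last q) with hd
    have hfe : (fun y : Euc T ↦ fderiv ℝ (fun y : Euc T ↦ f (y a) * g (y b)) y
        (EuclideanSpace.single d 1)) = fun y : Euc T ↦
        (if a = d then deriv f (y a) * g (y b) else 0) +
          (if b = d then f (y a) * deriv g (y b) else 0) :=
      funext fun y ↦ fderiv_prod_apply hf hg a b d y
    rw [hfe]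
    obtain ⟨j, hja, hjb⟩ := hbad
    have hjlast : j ≠ Fin.last q → ∃ j0 : Fin q, c (Fin.castSucc j0) ≠ a ∧ c (Fin.castSucc j0) ≠ b := by
      intro hne
      rcases Fin.exists_castSucc_eq.2 hne with ⟨j0, rfl⟩
      exact ⟨j0, hja, hjb⟩
    by_cases had : a = d
    · have hbd : ¬ b = d := fun h ↦ hab (had.trans h.symm)
      simp only [if_pos had, if_neg hbd, add_zero]
      have hne : j ≠ Fin.last q := fun h ↦ hja (by rw [h, ← hd, ← had])
      exact IH (deriv f) g hf.deriv hg _ (hjlast hne)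
    · by_cases hbd : b = d
      · simp only [if_neg had, if_pos hbd, zero_add]
        have hne : j ≠ Fin.last q := fun h ↦ hjb (by rw [h, ← hd, ← hbd])
        exact IH f (deriv g) hf hg.deriv _ (hjlast hne)
      · simp only [if_neg had, if_neg hbd, add_zero]
        exact iteratedFDeriv_zero_fun_apply

/-- unused-coordinate lemma, single-factor form. -/
lemma lemD0 (x : Euc T) (a : Fin T) :
    ∀ (q : ℕ) (f : ℝ → ℝ), Sm f →
      ∀ (c : Fin q → Fin T), (∃ j : Fin q, c j ≠ a) →
      iteratedFDeriv ℝ q (fun y : Euc T ↦ f (y a)) x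
        (fun j ↦ EuclideanSpace.single (c j) 1) = 0 := by
  intro q
  induction q with
  | zero =>
    intro f hf c hbad
    exact absurd hbad (by rintro ⟨j, -⟩; exact j.elim0)
  | succ q IH =>
    intro f hf c hbad
    have hsm : ∀ n : ℕ, ContDiff ℝ n (fun y : Euc T ↦ f (y a)) := fun n ↦
      (hf n).comp (EuclideanSpace.proj a : EuclideanSpace ℝ (Fin T) →L[ℝ] ℝ).contDiff
    rw [iter_right hsm q _ x]
    set d := c (Fin.last q) with hd
    have hfe : (fun y : Euc T ↦ fderiv ℝ (fun y : Euc T ↦ f (y a)) y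
        (EuclideanSpace.single d 1)) = fun y : Euc T ↦
        (if a = d then deriv f (y a) else 0) :=
      funext fun y ↦ fderiv_coord_apply hf a d y
    rw [hfe]
    obtain ⟨j, hja⟩ := hbad
    by_cases had : a = d
    · simp only [if_pos had]
      have hne : j ≠ Fin.last q := fun h ↦ hja (by rw [h, ← hd, ← had])
      rcases Fin.exists_castSucc_eq.2 hne with ⟨j0, rfl⟩
      exact IH (deriv f) hf.deriv _ ⟨j0, hja⟩
    · simp only [if_neg had]
      exact iteratedFDeriv_zero_fun_apply

lemma Sm_prod {T : ℕ} {f g : ℝ → ℝ} (hf : Sm f) (hg : Sm g) (a b : Fin T) (n : ℕ) :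
    ContDiff ℝ n (fun y : Euc T ↦ f (y a) * g (y b)) := Sm.prod hf hg a b n

/-- the Lean (0-indexed) predecessor coordinate used in `G`. -/
def ipred {T : ℕ} (i : Fin T) : Fin T :=
  ⟨(i : ℕ) - 1, Nat.lt_of_le_of_lt (Nat.sub_le _ _) i.isLt⟩

def tfun (T : ℕ) (i : Fin T) : Euc T → ℝ := fun y ↦
  if (i : ℕ) = 0 then Psi 1 * Lam (y i)
  else
    Psi (-(y (ipred i))) * Lam (-(y i)) + Psi (y (ipred i)) * Lam (y i)

lemma G_eq (T : ℕ) : G T = fun y ↦ ∑ i : Fin T, tfun T i y := rfl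

lemma tfun_eq_zero_case {T : ℕ} (i : Fin T) (h0 : (i : ℕ) = 0) :
    tfun T i = fun y ↦ (fun u ↦ Psi 1 * Lam u) (y i) :=
  funext fun y ↦ if_pos h0

lemma tfun_eq_pos_case {T : ℕ} (i : Fin T) (h0 : ¬(i : ℕ) = 0) :
    tfun T i = fun y ↦
      ((fun u ↦ Psi (-u)) (y (ipred i)) * (fun u ↦ Lam (-u)) (y i)) +
        ((fun u ↦ Psi u) (y (ipred i)) * (fun u ↦ Lam u) (y i)) :=
  funext fun y ↦ if_neg h0

lemma tfun_smooth (T : ℕ) (i : Fin T) (n : ℕ) : ContDiff ℝ n (tfun T i) := by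
  by_cases h0 : (i : ℕ) = 0
  · rw [tfun_eq_zero_case i h0]
    exact ((fun k ↦ contDiff_const.mul (Lam_contDiff k) : Sm fun u ↦ Psi 1 * Lam u) n).comp
      (EuclideanSpace.proj i : EuclideanSpace ℝ (Fin T) →L[ℝ] ℝ).contDiff
  · rw [tfun_eq_pos_case i h0]
    exact (Sm_prod PsiNeg_contDiff LamNeg_contDiff (ipred i) i n).add
      (Sm_prod Psi_contDiff Lam_contDiff (ipred i) i n)

lemma prog_bound {T : ℕ} (x : EuclideanSpace ℝ (Fin T)) {k : Fin T}
    (h : prog (1 / 2) x < (k : ℕ) + 1) : |x k| ≤ 1 / 2 := by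
  by_contra hgt
  push_neg at hgt
  have hmem : (k : ℕ) + 1 ∈ {i : ℕ | i = 0 ∨ ∃ j : Fin T, (j : ℕ) + 1 = i ∧ 1 / 2 < |x j|} :=
    Or.inr ⟨k, rfl, hgt⟩
  have hbdd : BddAbove {i : ℕ | i = 0 ∨ ∃ j : Fin T, (j : ℕ) + 1 = i ∧ 1 / 2 < |x j|} := by
    refine ⟨T, ?_⟩
    rintro i (rfl | ⟨j, rfl, -⟩)
    · exact Nat.zero_le T
    · exact j.isLt
  have hle : (k : ℕ) + 1 ≤ prog (1 / 2) x := le_csSup hbdd hmem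
  omega

end ZCAux

/-- Zero-chain property of `G_T`: for `q ≥ 1` and indices
`i₁, …, i_q` (as `idx : Fin q → Fin T`, `1`-indexed value `(idx j) + 1`), if
`max_j (idx j + 1) > prog_{1/2}(x) + 1` then the corresponding mixed partial derivative
`∂^q G_T / ∂x_{i₁} ⋯ ∂x_{i_q}` vanishes at `x`. -/
theorem stmt_16 (T : ℕ) (hT : 1 ≤ T) (x : EuclideanSpace ℝ (Fin T))
    (q : ℕ) (hq : 1 ≤ q) (idx : Fin q → Fin T)
    (hidx : ∃ j : Fin q, prog (1 / 2) x + 1 < (idx j : ℕ) + 1) :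
    iteratedFDeriv ℝ q (G T) x (fun j => EuclideanSpace.single (idx j) 1) = 0 := by
  obtain ⟨j₀, hj⟩ := hidx
  set p := prog (1 / 2) x with hp
  set m := idx j₀ with hm
  have hmp : p < (m : ℕ) := by omega
  have hm1 : 1 ≤ (m : ℕ) := by omega
  rw [G_eq, iteratedFDeriv_sum fun i _ ↦ tfun_smooth T i q]
  rw [Finset.sum_apply, ContinuousMultilinearMap.sum_apply]
  refine Finset.sum_eq_zero fun i _ ↦ ?_
  by_cases h0 : (i : ℕ) = 0
  · rw [tfun_eq_zero_case i h0]
    refine lemD0 x i q _ (fun k ↦ contDiff_const.mul (Lam_contDiff k)) idx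
      ⟨j₀, fun h ↦ ?_⟩
    rw [← hm] at h
    exact absurd (congrArg Fin.val h) (by omega)
  · rw [tfun_eq_pos_case i h0]
    set a := ipred i with ha
    have hai : (a : ℕ) = (i : ℕ) - 1 := rfl
    have hab : a ≠ i := fun h ↦ absurd (congrArg Fin.val h) (by omega)
    rw [iteratedFDeriv_add_apply'
      (Sm_prod PsiNeg_contDiff LamNeg_contDiff a i q).contDiffAt
      (Sm_prod Psi_contDiff Lam_contDiff a i q).contDiffAt]
    by_cases hmi : m = a ∨ m = i
    · have hpa : p < (a : ℕ) + 1 := by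
        rcases hmi with h | h
        · have := congrArg Fin.val h; omega
        · have := congrArg Fin.val h; omega
      have hxa : |x a| ≤ 1 / 2 := prog_bound x hpa
      have h1 : x a ≤ 1 / 2 := (abs_le.1 hxa).2
      have h2 : -(x a) ≤ 1 / 2 := by
        have := (abs_le.1 hxa).1; linarith
      have e1 := lemC x a q (fun u ↦ Psi (-u)) (fun u ↦ Lam (-u)) PsiNeg_contDiff
        LamNeg_contDiff (fun n ↦ PsiNeg_flat n (by simpa using h2)) i hab idx
      have e2 := lemC x a q (fun u ↦ Psi u) (fun u ↦ Lam u) Psi_contDiff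
        Lam_contDiff (fun n ↦ Psi_flat n h1) i hab idx
      rw [ContinuousMultilinearMap.add_apply, e1, e2, add_zero]
    · push_neg at hmi
      have e1 := lemD x a i hab q (fun u ↦ Psi (-u)) (fun u ↦ Lam (-u)) PsiNeg_contDiff
        LamNeg_contDiff idx ⟨j₀, hmi.1, hmi.2⟩
      have e2 := lemD x a i hab q (fun u ↦ Psi u) (fun u ↦ Lam u) Psi_contDiff
        Lam_contDiff idx ⟨j₀, hmi.1, hmi.2⟩
      rw [ContinuousMultilinearMap.add_apply, e1, e2, add_zero]
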